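/- arXiv:2007.02910 — 5 statements merged into one kernel-verified Lean document; each statement's English description precedes it below -/
import Mathlib

section
/- Let A have full rank with rows a_i of unit ℓ^2 norm, let x solve Ax = b, and let x_k be the current iterate with error e_k = x_k − x ≠ 0. If the next iterate is x_{k+1} = x_k + (b_i − ⟨a_i, x_k⟩) a_i where the index i ∈ {1,…,m} is chosen at random with probability |⟨a_i, x_k⟩ − b_i|^p / ‖Ax_k − b‖_{ℓ^p}^p, then E‖x_{k+1} − x‖_2^2 = (1 − ‖A e_k‖_{ℓ^{p+2}}^{p+2} / (‖A e_k‖_{ℓ^p}^p · ‖e_k‖_2^2)) · ‖e_k‖_2^2. -/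
/-- ℓ^q norm on ℝ^m. -/
noncomputable def lpNorm {m : ℕ} (q : ℝ) (y : Fin m → ℝ) : ℝ :=
  (∑ i, |y i| ^ q) ^ (1 / q)

/-- One step of the weighted randomized Kaczmarz method: the expected squared error after
choosing equation `i` with probability `|⟨aᵢ,x_k⟩ - bᵢ|^p / ‖Ax_k - b‖_{ℓ^p}^p` and setting
`x_{k+1} = x_k + (bᵢ - ⟨aᵢ,x_k⟩) aᵢ` equals
`(1 - ‖Ae_k‖_{ℓ^{p+2}}^{p+2}/(‖Ae_k‖_{ℓ^p}^p ‖e_k‖₂²)) ‖e_k‖₂²`, where `e_k = x_k - x`. -/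
theorem weighted_kaczmarz_one_step {m n : ℕ} (A : Matrix (Fin m) (Fin n) ℝ)
    (hmn : n ≤ m) (hrank : A.rank = n)
    (hrows : ∀ i, ∑ j, (A i j) ^ 2 = 1)
    (b : Fin m → ℝ) (x : Fin n → ℝ) (hx : A.mulVec x = b)
    (xk : Fin n → ℝ) (he : xk - x ≠ 0)
    (p : ℝ) (hp : 0 < p) :
    (∑ i, (|A.mulVec xk i - b i| ^ p / ∑ i', |A.mulVec xk i' - b i'| ^ p) *
        ∑ j, ((xk + (b i - A.mulVec xk i) • A i) j - x j) ^ 2) =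
      (1 - lpNorm (p + 2) (A.mulVec (xk - x)) ^ (p + 2) /
            (lpNorm p (A.mulVec (xk - x)) ^ p * ∑ j, (xk j - x j) ^ 2)) *
        ∑ j, (xk j - x j) ^ 2 := by
  have hx' : ∀ i, A.mulVec xk i - b i = A.mulVec (xk - x) i := by
    intro i
    rw [← hx, Matrix.mulVec_sub]
    simp
  set e : Fin n → ℝ := xk - x with he'
  set r : Fin m → ℝ := A.mulVec e with hr'
  set S : ℝ := ∑ i, |r i| ^ p with hS'
  set T : ℝ := ∑ i, |r i| ^ (p + 2) with hT'
  set E : ℝ := ∑ j, e j ^ 2 with hE'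
  have hEpos : 0 < E := by
    obtain ⟨j, hj⟩ := Function.ne_iff.mp he
    exact Finset.sum_pos' (fun j _ => sq_nonneg _)
      ⟨j, Finset.mem_univ j, by
        have := sq_abs (e j); nlinarith [abs_pos.mpr hj]⟩
  -- injectivity from the rank hypothesis
  have hrne : r ≠ 0 := by
    intro h
    apply he
    have hker : LinearMap.ker A.mulVecLin = ⊥ := by
      have h1 := LinearMap.finrank_range_add_finrank_ker A.mulVecLin
      rw [Module.finrank_pi] at h1
      rw [Matrix.rank] at hrank
      simp only [Fintype.card_fin] at h1
      have h0 : Module.finrank ℝ (LinearMap.ker A.mulVecLin) = 0 := by omega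
      exact Submodule.finrank_eq_zero.mp h0
    have : e ∈ LinearMap.ker A.mulVecLin := by
      simpa [Matrix.mulVecLin_apply] using h
    simpa [hker] using this
  have hSpos : 0 < S := by
    obtain ⟨i, hi⟩ := Function.ne_iff.mp hrne
    refine Finset.sum_pos' (fun i _ => Real.rpow_nonneg (abs_nonneg _) p)
      ⟨i, Finset.mem_univ i, Real.rpow_pos_of_pos (abs_pos.mpr hi) p⟩
  -- per-index squared error
  have hterm : ∀ i, (∑ j, ((xk + (b i - A.mulVec xk i) • A i) j - x j) ^ 2)
      = E - (r i) ^ 2 := by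
    intro i
    have hc : b i - A.mulVec xk i = -(r i) := by
      rw [← hx' i]; ring
    have hip : ∑ j, A i j * e j = r i := by
      simp [hr', Matrix.mulVec, dotProduct]
    have : ∀ j, (xk + (b i - A.mulVec xk i) • A i) j - x j = e j - r i * A i j := by
      intro j
      simp [hc, he']
      ring
    simp only [this]
    have expand : ∀ j, (e j - r i * A i j) ^ 2
        = e j ^ 2 - 2 * r i * (A i j * e j) + (r i) ^ 2 * (A i j) ^ 2 := by
      intro j; ring
    rw [Finset.sum_congr rfl (fun j _ => expand j)]
    rw [Finset.sum_add_distrib, Finset.sum_sub_distrib, ← Finset.mul_sum,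
      ← Finset.mul_sum, hip, hrows i]
    ring
  -- rpow arithmetic: |r|^p * r^2 = |r|^(p+2)
  have hpow : ∀ i, |r i| ^ p * (r i) ^ 2 = |r i| ^ (p + 2) := by
    intro i
    rcases eq_or_ne (r i) 0 with h | h
    · simp [h, Real.zero_rpow hp.ne', Real.zero_rpow (by linarith : p + 2 ≠ 0)]
    · have h2 : (p + 2 : ℝ) = p + ((2:ℕ):ℝ) := by norm_num
      rw [h2, Real.rpow_add (abs_pos.mpr h), Real.rpow_natCast, sq_abs]
  -- lpNorm powers
  have hTnn : (0:ℝ) ≤ T := Finset.sum_nonneg fun i _ => Real.rpow_nonneg (abs_nonneg _) _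
  have hlp2 : lpNorm (p + 2) r ^ (p + 2) = T := by
    rw [lpNorm, ← Real.rpow_mul hTnn,
      one_div_mul_cancel (by linarith : p + 2 ≠ 0), Real.rpow_one]
  have hlp : lpNorm p r ^ p = S := by
    rw [lpNorm, ← Real.rpow_mul (le_of_lt hSpos),
      one_div_mul_cancel hp.ne', Real.rpow_one]
  -- rewrite everything
  simp only [hx', hterm]
  have key : ∑ i, |r i| ^ p / S * (E - r i ^ 2) = E - T / S := by
    have : ∀ i, |r i| ^ p / S * (E - r i ^ 2)
        = (|r i| ^ p * E - |r i| ^ (p + 2)) / S := by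
      intro i
      rw [← hpow i]
      ring
    rw [Finset.sum_congr rfl (fun i _ => this i), ← Finset.sum_div,
      Finset.sum_sub_distrib, ← Finset.sum_mul, ← hS', ← hT']
    field_simp
  rw [← hS', hlp2, hlp]
  have hEeq : (∑ j, (xk j - x j) ^ 2) = E := by
    rw [hE']; simp [he']
  rw [hEeq, key]
  field_simp
end

section
/- Main theorem (weighted randomized Kaczmarz convergence): Let A ∈ ℝ^{m×n} with m ≥ n, rank n, rows of unit ℓ^2 norm, let x solve Ax = b, and let 0 < p < ∞. Let (x_k) be the weighted randomized Kaczmarz iteration where at each step equation i is chosen with probability |⟨a_i, x_k⟩ − b_i|^p / ‖Ax_k − b‖_{ℓ^p}^p and x_{k+1} = x_k + (b_i − ⟨a_i, x_k⟩) a_i. Then E‖x_k − x‖_2^2 ≤ (1 − c_p)^k ‖x_0 − x‖_2^2, where c_p = inf_{z ≠ 0} ‖Az‖_{ℓ^{p+2}}^{p+2} / (‖Az‖_{ℓ^p}^p ‖z‖_2^2). -/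
/-- One weighted Kaczmarz step using equation `i`. -/
noncomputable def kacStep {m n : ℕ} (A : Matrix (Fin m) (Fin n) ℝ) (b : Fin m → ℝ)
    (y : Fin n → ℝ) (i : Fin m) : Fin n → ℝ :=
  y + (b i - A.mulVec y i) • A i

/-- Selection probability of equation `i` at state `y`. -/
noncomputable def kacWeight {m n : ℕ} (A : Matrix (Fin m) (Fin n) ℝ) (b : Fin m → ℝ)
    (p : ℝ) (y : Fin n → ℝ) (i : Fin m) : ℝ :=
  |A.mulVec y i - b i| ^ p / ∑ i', |A.mulVec y i' - b i'| ^ p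

/-- Expected squared distance `E ‖x_k - x‖₂²` of the weighted randomized Kaczmarz iteration
after `k` steps started at `y`. -/
noncomputable def kacErr {m n : ℕ} (A : Matrix (Fin m) (Fin n) ℝ) (b : Fin m → ℝ)
    (p : ℝ) (x : Fin n → ℝ) : ℕ → (Fin n → ℝ) → ℝ
  | 0, y => ∑ j, (y j - x j) ^ 2
  | k + 1, y => ∑ i, kacWeight A b p y i * kacErr A b p x k (kacStep A b y i)

lemma lpNorm_pow {m : ℕ} {q : ℝ} (hq : 0 < q) (v : Fin m → ℝ) :
    lpNorm q v ^ q = ∑ i, |v i| ^ q := by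
  unfold lpNorm
  rw [← Real.rpow_mul (Finset.sum_nonneg fun i _ => Real.rpow_nonneg (abs_nonneg _) _),
    one_div, inv_mul_cancel₀ hq.ne', Real.rpow_one]

lemma kacErr_self {m n : ℕ} (A : Matrix (Fin m) (Fin n) ℝ) (b : Fin m → ℝ)
    {p : ℝ} (hp : 0 < p) {x : Fin n → ℝ} (hx : A.mulVec x = b) :
    ∀ k, kacErr A b p x k x = 0
  | 0 => by simp [kacErr]
  | k + 1 => by
    simp [kacErr, kacWeight, hx, sub_self, Real.zero_rpow hp.ne']

/-- Main theorem: `E‖x_k - x‖₂² ≤ (1 - c_p)^k ‖x_0 - x‖₂²`, where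
`c_p = inf_{z ≠ 0} ‖Az‖_{ℓ^{p+2}}^{p+2}/(‖Az‖_{ℓ^p}^p ‖z‖₂²)`. -/
theorem weighted_kaczmarz_convergence {m n : ℕ} (A : Matrix (Fin m) (Fin n) ℝ)
    (hmn : n ≤ m) (hrank : A.rank = n)
    (hrows : ∀ i, ∑ j, (A i j) ^ 2 = 1)
    (b : Fin m → ℝ) (x : Fin n → ℝ) (hx : A.mulVec x = b)
    (p : ℝ) (hp : 0 < p) (x0 : Fin n → ℝ) (k : ℕ) :
    kacErr A b p x k x0 ≤
      (1 - ⨅ z : {z : Fin n → ℝ // z ≠ 0},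
          lpNorm (p + 2) (A.mulVec z.1) ^ (p + 2) /
            (lpNorm p (A.mulVec z.1) ^ p * ∑ j, (z.1 j) ^ 2)) ^ k *
        ∑ j, (x0 j - x j) ^ 2 := by
  classical
  have hinj : Function.Injective A.mulVec := by
    have h := LinearMap.finrank_range_add_finrank_ker A.mulVecLin
    rw [show Module.finrank ℝ (LinearMap.range A.mulVecLin) = A.rank from rfl, hrank,
      Module.finrank_pi] at h
    simp [Fintype.card_fin] at h
    exact LinearMap.ker_eq_bot.mp h
  set c := ⨅ z : {z : Fin n → ℝ // z ≠ 0},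
      lpNorm (p + 2) (A.mulVec z.1) ^ (p + 2) /
        (lpNorm p (A.mulVec z.1) ^ p * ∑ j, (z.1 j) ^ 2) with hc
  -- basic facts about nonzero vectors
  have key : ∀ z : Fin n → ℝ, z ≠ 0 →
      0 < (∑ j, z j ^ 2) ∧ 0 < (∑ i, |A.mulVec z i| ^ p) ∧
      (∑ i, |A.mulVec z i| ^ (p + 2)) ≤ (∑ i, |A.mulVec z i| ^ p) * (∑ j, z j ^ 2) := by
    intro z hz
    obtain ⟨j0, hj0⟩ := Function.ne_iff.mp hz
    have hE : 0 < ∑ j, z j ^ 2 :=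
      Finset.sum_pos' (fun j _ => sq_nonneg _) ⟨j0, Finset.mem_univ j0, by
        have h0 : z j0 ≠ 0 := by simpa using hj0
        positivity⟩
    have hAz : A.mulVec z ≠ 0 := by
      intro h
      exact hz (hinj (h.trans (A.mulVec_zero).symm))
    obtain ⟨i0, hi0⟩ := Function.ne_iff.mp hAz
    have hS : 0 < ∑ i, |A.mulVec z i| ^ p :=
      Finset.sum_pos' (fun i _ => Real.rpow_nonneg (abs_nonneg _) _)
        ⟨i0, Finset.mem_univ i0,
          Real.rpow_pos_of_pos (abs_pos.mpr (by simpa using hi0)) p⟩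
    refine ⟨hE, hS, ?_⟩
    rw [Finset.sum_mul]
    apply Finset.sum_le_sum
    intro i _
    have hCS : (A.mulVec z i) ^ 2 ≤ ∑ j, z j ^ 2 := by
      have h2 := Finset.sum_mul_sq_le_sq_mul_sq Finset.univ (fun j => A i j) (fun j => z j)
      have hmv : A.mulVec z i = ∑ j, A i j * z j := by
        simp [Matrix.mulVec, dotProduct]
      rw [hrows i, one_mul] at h2
      rw [hmv]
      exact h2
    calc |A.mulVec z i| ^ (p + 2)
        = |A.mulVec z i| ^ p * |A.mulVec z i| ^ (2 : ℝ) :=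
          Real.rpow_add' (abs_nonneg _) (by positivity)
      _ = |A.mulVec z i| ^ p * (A.mulVec z i) ^ 2 := by
          rw [Real.rpow_two, sq_abs]
      _ ≤ |A.mulVec z i| ^ p * ∑ j, z j ^ 2 :=
          mul_le_mul_of_nonneg_left hCS (Real.rpow_nonneg (abs_nonneg _) _)
  have hbdd : BddBelow (Set.range fun z : {z : Fin n → ℝ // z ≠ 0} =>
      lpNorm (p + 2) (A.mulVec z.1) ^ (p + 2) /
        (lpNorm p (A.mulVec z.1) ^ p * ∑ j, (z.1 j) ^ 2)) := by
    refine ⟨0, ?_⟩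
    rintro _ ⟨z, rfl⟩
    have h1 : (0:ℝ) ≤ lpNorm (p + 2) (A.mulVec z.1) :=
      Real.rpow_nonneg (Finset.sum_nonneg fun i _ => Real.rpow_nonneg (abs_nonneg _) _) _
    have h2 : (0:ℝ) ≤ lpNorm p (A.mulVec z.1) :=
      Real.rpow_nonneg (Finset.sum_nonneg fun i _ => Real.rpow_nonneg (abs_nonneg _) _) _
    exact div_nonneg (Real.rpow_nonneg h1 _)
      (mul_nonneg (Real.rpow_nonneg h2 _) (Finset.sum_nonneg fun j _ => sq_nonneg _))
  have hcle : ∀ (z : Fin n → ℝ), z ≠ 0 →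
      c ≤ (∑ i, |A.mulVec z i| ^ (p + 2)) /
        ((∑ i, |A.mulVec z i| ^ p) * ∑ j, z j ^ 2) := by
    intro z hz
    have h := ciInf_le hbdd (⟨z, hz⟩ : {z : Fin n → ℝ // z ≠ 0})
    rwa [lpNorm_pow (by positivity : (0:ℝ) < p + 2), lpNorm_pow hp] at h
  have h1c : (0:ℝ) ≤ 1 - c := by
    rcases isEmpty_or_nonempty {z : Fin n → ℝ // z ≠ 0} with he | hne
    · have : c = 0 := Real.iInf_of_isEmpty _
      simp [this]
    · obtain ⟨⟨z, hz⟩⟩ := hne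
      obtain ⟨hE, hS, hNSE⟩ := key z hz
      have h1 := hcle z hz
      have h2 : (∑ i, |A.mulVec z i| ^ (p + 2)) /
          ((∑ i, |A.mulVec z i| ^ p) * ∑ j, z j ^ 2) ≤ 1 :=
        (div_le_one (mul_pos hS hE)).mpr hNSE
      linarith
  induction k generalizing x0 with
  | zero => simp [kacErr]
  | succ k ih =>
    by_cases hxy : x0 = x
    · subst hxy
      rw [kacErr_self A b hp hx]
      simp
    · have hzne : x0 - x ≠ 0 := sub_ne_zero.mpr hxy
      obtain ⟨hE, hS, hNSE⟩ := key (x0 - x) hzne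
      have hEE : (∑ j, (x0 - x) j ^ 2) = ∑ j, (x0 j - x j) ^ 2 := rfl
      have hdz : ∀ i, A.mulVec x0 i - b i = A.mulVec (x0 - x) i := by
        intro i
        rw [Matrix.mulVec_sub, ← hx]
        rfl
      set d : Fin m → ℝ := fun i => A.mulVec (x0 - x) i with hd
      set S := ∑ i, |d i| ^ p with hSdef
      set N := ∑ i, |d i| ^ (p + 2) with hNdef
      have hw : ∀ i, kacWeight A b p x0 i = |d i| ^ p / S := by
        intro i
        unfold kacWeight
        simp only [hdz, hd]
        rfl
      have hwnn : ∀ i, 0 ≤ kacWeight A b p x0 i := by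
        intro i
        rw [hw i]
        exact div_nonneg (Real.rpow_nonneg (abs_nonneg _) _) hS.le
      have hstep : ∀ i, (∑ j, (kacStep A b x0 i j - x j) ^ 2) =
          (∑ j, (x0 j - x j) ^ 2) - d i ^ 2 := by
        intro i
        have hbi : b i - A.mulVec x0 i = -(d i) := by
          rw [hd]; simp only [← hdz]; ring
        have hterm : ∀ j, kacStep A b x0 i j - x j = (x0 j - x j) - d i * A i j := by
          intro j
          simp only [kacStep, Pi.add_apply, Pi.smul_apply, smul_eq_mul, hbi]
          ring
        have hsum : (∑ j, A i j * (x0 j - x j)) = d i := by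
          simp [hd, Matrix.mulVec, dotProduct, mul_sub, Finset.sum_sub_distrib]
        calc (∑ j, (kacStep A b x0 i j - x j) ^ 2)
            = ∑ j, ((x0 j - x j) ^ 2 - 2 * d i * (A i j * (x0 j - x j))
                + d i ^ 2 * (A i j) ^ 2) :=
              Finset.sum_congr rfl (fun j _ => by rw [hterm j]; ring)
          _ = (∑ j, (x0 j - x j) ^ 2) - 2 * d i * (∑ j, A i j * (x0 j - x j))
                + d i ^ 2 * ∑ j, (A i j) ^ 2 := by
              rw [Finset.sum_add_distrib, Finset.sum_sub_distrib, ← Finset.mul_sum,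
                ← Finset.mul_sum]
          _ = (∑ j, (x0 j - x j) ^ 2) - d i ^ 2 := by
              rw [hsum, hrows i]; ring
      have hNid : (∑ i, |d i| ^ p * d i ^ 2) = N := by
        refine Finset.sum_congr rfl fun i _ => ?_
        rw [Real.rpow_add' (abs_nonneg _) (by positivity : p + 2 ≠ 0), Real.rpow_two, sq_abs]
      have hmain : (∑ i, kacWeight A b p x0 i * ∑ j, (kacStep A b x0 i j - x j) ^ 2) =
          (∑ j, (x0 j - x j) ^ 2) - N / S := by
        calc (∑ i, kacWeight A b p x0 i * ∑ j, (kacStep A b x0 i j - x j) ^ 2)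
            = ∑ i, (|d i| ^ p / S * (∑ j, (x0 j - x j) ^ 2) - |d i| ^ p * d i ^ 2 / S) :=
              Finset.sum_congr rfl (fun i _ => by rw [hw i, hstep i]; ring)
          _ = (∑ i, |d i| ^ p) / S * (∑ j, (x0 j - x j) ^ 2)
                - (∑ i, |d i| ^ p * d i ^ 2) / S := by
              rw [Finset.sum_sub_distrib, ← Finset.sum_mul, ← Finset.sum_div,
                ← Finset.sum_div]
          _ = (∑ j, (x0 j - x j) ^ 2) - N / S := by
              rw [hNid, ← hSdef, div_self hS.ne', one_mul]
      have hcE : c * (∑ j, (x0 j - x j) ^ 2) ≤ N / S := by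
        have h1 := hcle (x0 - x) hzne
        rw [hEE] at h1
        calc c * (∑ j, (x0 j - x j) ^ 2)
            ≤ N / (S * ∑ j, (x0 j - x j) ^ 2) * (∑ j, (x0 j - x j) ^ 2) := by
              rw [hEE] at hE
              exact mul_le_mul_of_nonneg_right h1 hE.le
          _ = N / S := by
              rw [hEE] at hE
              field_simp
      calc kacErr A b p x (k + 1) x0
          = ∑ i, kacWeight A b p x0 i * kacErr A b p x k (kacStep A b x0 i) := rfl
        _ ≤ ∑ i, kacWeight A b p x0 i *
              ((1 - c) ^ k * ∑ j, (kacStep A b x0 i j - x j) ^ 2) := by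
            refine Finset.sum_le_sum fun i _ => ?_
            exact mul_le_mul_of_nonneg_left (ih _) (hwnn i)
        _ = (1 - c) ^ k * ∑ i, kacWeight A b p x0 i *
              ∑ j, (kacStep A b x0 i j - x j) ^ 2 := by
            rw [Finset.mul_sum]
            exact Finset.sum_congr rfl fun i _ => by ring
        _ = (1 - c) ^ k * ((∑ j, (x0 j - x j) ^ 2) - N / S) := by rw [hmain]
        _ ≤ (1 - c) ^ k * ((1 - c) * ∑ j, (x0 j - x j) ^ 2) := by
            refine mul_le_mul_of_nonneg_left ?_ (pow_nonneg h1c k)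
            nlinarith [hcE]
        _ = (1 - c) ^ (k + 1) * ∑ j, (x0 j - x j) ^ 2 := by ring
end

section
/- For a fixed nonzero vector y ∈ ℝ^m, the function p ↦ ‖y‖_{ℓ^{p+2}}^{p+2} / ‖y‖_{ℓ^p}^p is nondecreasing on (0, ∞). -/
lemma pointwise_pos {a b p q : ℝ} (ha : 0 < a) (hb : 0 < b) (hpq : p ≤ q) :
    a ^ (p+2) * b ^ q + b ^ (p+2) * a ^ q ≤ a ^ (q+2) * b ^ p + b ^ (q+2) * a ^ p := by
  have h1 : a ^ (p+2) = a ^ p * a ^ (2:ℝ) := Real.rpow_add ha p 2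
  have h2 : a ^ q = a ^ p * a ^ (q-p) := by
    rw [← Real.rpow_add ha]; ring_nf
  have h3 : a ^ (q+2) = a ^ p * a ^ (q-p) * a ^ (2:ℝ) := by
    rw [← Real.rpow_add ha, ← Real.rpow_add ha]; ring_nf
  have g1 : b ^ (p+2) = b ^ p * b ^ (2:ℝ) := Real.rpow_add hb p 2
  have g2 : b ^ q = b ^ p * b ^ (q-p) := by
    rw [← Real.rpow_add hb]; ring_nf
  have g3 : b ^ (q+2) = b ^ p * b ^ (q-p) * b ^ (2:ℝ) := by
    rw [← Real.rpow_add hb, ← Real.rpow_add hb]; ring_nf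
  rw [h1, h2, h3, g1, g2, g3]
  have hA : 0 < a ^ p := Real.rpow_pos_of_pos ha p
  have hB : 0 < b ^ p := Real.rpow_pos_of_pos hb p
  rcases le_total a b with hab | hab
  · have hc : a ^ (q-p) ≤ b ^ (q-p) := Real.rpow_le_rpow ha.le hab (by linarith)
    have h2' : a ^ (2:ℝ) ≤ b ^ (2:ℝ) := Real.rpow_le_rpow ha.le hab (by norm_num)
    nlinarith [mul_pos hA hB, mul_nonneg (sub_nonneg.2 hc) (sub_nonneg.2 h2')]
  · have hc : b ^ (q-p) ≤ a ^ (q-p) := Real.rpow_le_rpow hb.le hab (by linarith)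
    have h2' : b ^ (2:ℝ) ≤ a ^ (2:ℝ) := Real.rpow_le_rpow hb.le hab (by norm_num)
    nlinarith [mul_pos hA hB, mul_nonneg (sub_nonneg.2 hc) (sub_nonneg.2 h2')]

lemma pointwise {a b p q : ℝ} (ha : 0 ≤ a) (hb : 0 ≤ b) (hp : 0 < p) (hpq : p ≤ q) :
    a ^ (p+2) * b ^ q + b ^ (p+2) * a ^ q ≤ a ^ (q+2) * b ^ p + b ^ (q+2) * a ^ p := by
  have hq : 0 < q := lt_of_lt_of_le hp hpq
  rcases eq_or_lt_of_le ha with rfl | ha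
  · simp [Real.zero_rpow (by positivity : (p:ℝ)+2 ≠ 0),
      Real.zero_rpow (by positivity : (q:ℝ)+2 ≠ 0),
      Real.zero_rpow hp.ne', Real.zero_rpow hq.ne']
  rcases eq_or_lt_of_le hb with rfl | hb
  · simp [Real.zero_rpow (by positivity : (p:ℝ)+2 ≠ 0),
      Real.zero_rpow (by positivity : (q:ℝ)+2 ≠ 0),
      Real.zero_rpow hp.ne', Real.zero_rpow hq.ne']
  exact pointwise_pos ha hb hpq

/-- For a fixed nonzero `y ∈ ℝ^m`, the map `p ↦ ‖y‖_{ℓ^{p+2}}^{p+2}/‖y‖_{ℓ^p}^p`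
is nondecreasing on `(0,∞)`. -/
theorem ratio_monotone {m : ℕ} (y : Fin m → ℝ) (hy : y ≠ 0)
    (p q : ℝ) (hp : 0 < p) (hpq : p ≤ q) :
    lpNorm (p + 2) y ^ (p + 2) / lpNorm p y ^ p ≤
      lpNorm (q + 2) y ^ (q + 2) / lpNorm q y ^ q := by
  have hq : 0 < q := lt_of_lt_of_le hp hpq
  set a : Fin m → ℝ := fun i => |y i| with ha
  have hann : ∀ i, 0 ≤ a i := fun i => abs_nonneg _
  set S : ℝ → ℝ := fun r => ∑ i, a i ^ r with hS
  have hSnn : ∀ r, 0 ≤ S r := fun r => Finset.sum_nonneg fun i _ => Real.rpow_nonneg (hann i) r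
  have hSpos : ∀ r, 0 < r → 0 < S r := by
    intro r hr
    obtain ⟨i, hi⟩ := Function.ne_iff.1 hy
    refine Finset.sum_pos' (fun j _ => Real.rpow_nonneg (hann j) r) ⟨i, Finset.mem_univ i, ?_⟩
    exact Real.rpow_pos_of_pos (abs_pos.2 hi) r
  have hlp : ∀ r, 0 < r → lpNorm r y ^ r = S r := by
    intro r hr
    have : lpNorm r y = S r ^ (1/r) := rfl
    rw [this, ← Real.rpow_mul (hSnn r), one_div, inv_mul_cancel₀ hr.ne', Real.rpow_one]
  rw [hlp (p+2) (by linarith), hlp (q+2) (by linarith), hlp p hp, hlp q hq]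
  rw [div_le_div_iff₀ (hSpos p hp) (hSpos q hq)]
  -- key inequality : S(p+2) * S q ≤ S(q+2) * S p
  have expand : ∀ u v : ℝ, (S u * S v) * 2
      = ∑ i, ∑ j, (a i ^ u * a j ^ v + a j ^ u * a i ^ v) := by
    intro u v
    simp_rw [Finset.sum_add_distrib]
    rw [Finset.sum_comm (f := fun i j => a j ^ u * a i ^ v)]
    simp only [hS]
    rw [Finset.sum_mul_sum]
    ring
  have key : (S (p+2) * S q) * 2 ≤ (S (q+2) * S p) * 2 := by
    rw [expand, expand]
    refine Finset.sum_le_sum fun i _ => Finset.sum_le_sum fun j _ => ?_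
    exact pointwise (hann i) (hann j) hp hpq
  linarith
end

section
/- Let c_1, …, c_n ≥ 0 and define F(p) = (∑_{i=1}^n e^{c_i(p+2)}) / (∑_{i=1}^n e^{c_i p}) for p > 0. Then F is nondecreasing in p. -/
private lemma key_pair (p q x y : ℝ) (hpq : p ≤ q) :
    Real.exp (x * (p + 2) + y * q) + Real.exp (y * (p + 2) + x * q) ≤
      Real.exp (x * (q + 2) + y * p) + Real.exp (y * (q + 2) + x * p) := by
  have e1 : x * (p + 2) + y * q = (x + y) * p + (2 * x + y * (q - p)) := by ring
  have e2 : y * (p + 2) + x * q = (x + y) * p + (2 * y + x * (q - p)) := by ring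
  have e3 : x * (q + 2) + y * p = (x + y) * p + (2 * x + x * (q - p)) := by ring
  have e4 : y * (q + 2) + x * p = (x + y) * p + (2 * y + y * (q - p)) := by ring
  rw [e1, e2, e3, e4, Real.exp_add, Real.exp_add, Real.exp_add, Real.exp_add,
    Real.exp_add, Real.exp_add, Real.exp_add, Real.exp_add]
  have hE : 0 < Real.exp ((x + y) * p) := Real.exp_pos _
  have hkey : 0 ≤ (Real.exp (2 * x) - Real.exp (2 * y)) *
      (Real.exp (x * (q - p)) - Real.exp (y * (q - p))) := by
    rcases le_total x y with h | h
    · have h1 : Real.exp (2 * x) ≤ Real.exp (2 * y) := by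
        apply Real.exp_le_exp.2; linarith
      have h2 : Real.exp (x * (q - p)) ≤ Real.exp (y * (q - p)) := by
        apply Real.exp_le_exp.2; nlinarith
      nlinarith
    · have h1 : Real.exp (2 * y) ≤ Real.exp (2 * x) := by
        apply Real.exp_le_exp.2; linarith
      have h2 : Real.exp (y * (q - p)) ≤ Real.exp (x * (q - p)) := by
        apply Real.exp_le_exp.2; nlinarith
      nlinarith
  nlinarith [hE, hkey]

/-- For `c₁,…,c_n ≥ 0`, the map `p ↦ (∑ i, e^{cᵢ(p+2)})/(∑ i, e^{cᵢ p})` is nondecreasing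
on `(0,∞)`. -/
theorem exp_ratio_monotone {n : ℕ} (c : Fin n → ℝ) (hc : ∀ i, 0 ≤ c i)
    (p q : ℝ) (hp : 0 < p) (hpq : p ≤ q) :
    (∑ i, Real.exp (c i * (p + 2))) / (∑ i, Real.exp (c i * p)) ≤
      (∑ i, Real.exp (c i * (q + 2))) / (∑ i, Real.exp (c i * q)) := by
  rcases Nat.eq_zero_or_pos n with rfl | hn
  · simp
  haveI : Nonempty (Fin n) := Fin.pos_iff_nonempty.mp hn
  have hne : (Finset.univ : Finset (Fin n)).Nonempty := Finset.univ_nonempty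
  have hdp : 0 < ∑ i, Real.exp (c i * p) :=
    Finset.sum_pos (fun i _ => Real.exp_pos _) hne
  have hdq : 0 < ∑ i, Real.exp (c i * q) :=
    Finset.sum_pos (fun i _ => Real.exp_pos _) hne
  rw [div_le_div_iff₀ hdp hdq]
  rw [Finset.sum_mul_sum, Finset.sum_mul_sum]
  have hrw : ∀ a b : ℝ, Real.exp a * Real.exp b = Real.exp (a + b) :=
    fun a b => (Real.exp_add a b).symm
  simp_rw [hrw]
  set f : Fin n → Fin n → ℝ := fun i j => Real.exp (c i * (p + 2) + c j * q) with hf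
  set g : Fin n → Fin n → ℝ := fun i j => Real.exp (c i * (q + 2) + c j * p) with hg
  have h2 : (∑ i, ∑ j, (f i j + f j i)) ≤ ∑ i, ∑ j, (g i j + g j i) := by
    apply Finset.sum_le_sum; intro i _
    apply Finset.sum_le_sum; intro j _
    exact key_pair p q (c i) (c j) hpq
  have hfc : (∑ i, ∑ j, f j i) = ∑ i, ∑ j, f i j := Finset.sum_comm
  have hgc : (∑ i, ∑ j, g j i) = ∑ i, ∑ j, g i j := Finset.sum_comm
  simp only [Finset.sum_add_distrib] at h2
  rw [hfc, hgc] at h2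
  linarith
end

section
/- Let A have unit-norm rows and let x solve Ax = b. If at each step of the Kaczmarz iteration an index i with |⟨a_i, x_k⟩ − b_i| = ‖Ax_k − b‖_{ℓ^∞} is chosen (maximal correction), then ‖x_{k+1} − x‖_2^2 = ‖x_k − x‖_2^2 − ‖A(x_k − x)‖_{ℓ^∞}^2 ≤ (1 − 1/(m‖A^{-1}‖_2^2)) ‖x_k − x‖_2^2. -/
/-- Euclidean norm. -/
noncomputable def e2 {n : ℕ} (z : Fin n → ℝ) : ℝ := Real.sqrt (∑ j, (z j) ^ 2)

/-- The maximal correction (greedy) Kaczmarz step: if `i` maximizes `|⟨aᵢ,x_k⟩ - bᵢ|`, then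
`‖x_{k+1}-x‖₂² = ‖x_k-x‖₂² - ‖A(x_k-x)‖_∞² ≤ (1 - 1/(m‖A⁻¹‖₂²)) ‖x_k-x‖₂²`. -/
theorem maximal_correction_step {m n : ℕ} (hm : 0 < m) (A : Matrix (Fin m) (Fin n) ℝ)
    (hrank : A.rank = n)
    (hrows : ∀ i, ∑ j, (A i j) ^ 2 = 1)
    (C : ℝ) (hC : ∀ z : Fin n → ℝ, e2 z ≤ C * e2 (A.mulVec z))
    (b : Fin m → ℝ) (x : Fin n → ℝ) (hx : A.mulVec x = b)
    (xk : Fin n → ℝ) (i : Fin m)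
    (hi : |A.mulVec xk i - b i| = ⨆ i', |A.mulVec xk i' - b i'|) :
    (∑ j, ((xk + (b i - A.mulVec xk i) • A i) j - x j) ^ 2) =
        (∑ j, (xk j - x j) ^ 2) - (⨆ i', |A.mulVec (xk - x) i'|) ^ 2 ∧
      (∑ j, ((xk + (b i - A.mulVec xk i) • A i) j - x j) ^ 2) ≤
        (1 - 1 / (m * C ^ 2)) * ∑ j, (xk j - x j) ^ 2 := by
  haveI : Nonempty (Fin m) := ⟨⟨0, hm⟩⟩
  -- residual
  set r : Fin m → ℝ := A.mulVec (xk - x) with hr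
  have hrdef : ∀ i', r i' = A.mulVec xk i' - b i' := by
    intro i'
    simp [hr, Matrix.mulVec_sub, hx]
  have hri : r i = ∑ j, A i j * (xk j - x j) := by
    simp [hr, Matrix.mulVec, dotProduct, mul_sub, Finset.sum_sub_distrib]
  have hc : b i - A.mulVec xk i = -(r i) := by
    rw [hrdef i]; ring
  -- the sup equals |r i|
  set s : ℝ := ⨆ i', |r i'| with hs
  have hsup : s = |r i| := by
    have : (⨆ i', |r i'|) = ⨆ i', |A.mulVec xk i' - b i'| := by
      congr 1; funext i'; rw [hrdef i']
    rw [hs, this, ← hi, hrdef i]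
  -- equality part
  have key : (∑ j, ((xk + (b i - A.mulVec xk i) • A i) j - x j) ^ 2) =
      (∑ j, (xk j - x j) ^ 2) - (r i) ^ 2 := by
    have h1 : ∀ j, ((xk + (b i - A.mulVec xk i) • A i) j - x j)
        = (xk j - x j) - r i * A i j := by
      intro j; simp [hc]; ring
    simp_rw [h1]
    have h2 : ∀ j ∈ Finset.univ, ((xk j - x j) - r i * A i j) ^ 2
        = ((xk j - x j) ^ 2 - (2 * r i) * (A i j * (xk j - x j)))
          + (r i)^2 * (A i j) ^ 2 := fun j _ => by ring
    rw [Finset.sum_congr rfl h2, Finset.sum_add_distrib, Finset.sum_sub_distrib,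
      ← Finset.mul_sum, ← Finset.mul_sum, hrows i, ← hri]
    ring
  have hsq : s ^ 2 = (r i) ^ 2 := by rw [hsup, sq_abs]
  constructor
  · rw [key, hsq]
  · -- inequality part
    rw [key, ← hsq]
    set S : ℝ := ∑ j, (xk j - x j) ^ 2 with hS
    have hS0 : 0 ≤ S := Finset.sum_nonneg fun j _ => sq_nonneg _
    rcases eq_or_lt_of_le hS0 with h0 | hSpos
    · -- S = 0 : everything collapses
      have hz : ∀ j, xk j - x j = 0 := by
        intro j
        have := (Finset.sum_eq_zero_iff_of_nonneg (fun j _ => sq_nonneg (xk j - x j))).1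
          h0.symm j (Finset.mem_univ j)
        exact pow_eq_zero_iff (by norm_num) |>.1 this
      have hr0 : r i = 0 := by
        rw [hri]; exact Finset.sum_eq_zero fun j _ => by rw [hz j, mul_zero]
      rw [← h0, hsq, hr0]
      norm_num
    · -- S > 0 : use hC
      have hCe := hC (xk - x)
      have he2S : e2 (xk - x) = Real.sqrt S := by
        simp [e2, hS]
      set T : ℝ := ∑ i', (r i') ^ 2 with hT
      have hT0 : 0 ≤ T := Finset.sum_nonneg fun j _ => sq_nonneg _
      have he2T : e2 (A.mulVec (xk - x)) = Real.sqrt T := by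
        simp [e2, hT, hr]
      rw [he2S, he2T] at hCe
      have hsqrtS : 0 < Real.sqrt S := Real.sqrt_pos.2 hSpos
      have hCpos : 0 < C := by
        by_contra h
        push_neg at h
        have : C * Real.sqrt T ≤ 0 :=
          mul_nonpos_iff.2 (Or.inr ⟨h, Real.sqrt_nonneg _⟩)
        linarith
      have hSCT : S ≤ C ^ 2 * T := by
        have := mul_self_le_mul_self (le_of_lt hsqrtS) hCe
        calc S = Real.sqrt S * Real.sqrt S := (Real.mul_self_sqrt hS0).symm
          _ ≤ (C * Real.sqrt T) * (C * Real.sqrt T) := this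
          _ = C ^ 2 * (Real.sqrt T * Real.sqrt T) := by ring
          _ = C ^ 2 * T := by rw [Real.mul_self_sqrt hT0]
      -- T ≤ m * (r i)^2
      have hbdd : BddAbove (Set.range fun i' => |r i'|) := Set.finite_range _ |>.bddAbove
      have hle : ∀ i', |r i'| ≤ |r i| := by
        intro i'
        rw [← hsup]
        exact le_ciSup hbdd i'
      have hTm : T ≤ m * (r i) ^ 2 := by
        have : ∀ i' ∈ Finset.univ, (r i') ^ 2 ≤ (r i) ^ 2 := by
          intro i' _
          rw [← sq_abs (r i'), ← sq_abs (r i)]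
          exact pow_le_pow_left₀ (abs_nonneg _) (hle i') 2
        calc T ≤ ∑ _i' : Fin m, (r i) ^ 2 := Finset.sum_le_sum this
          _ = m * (r i) ^ 2 := by simp [mul_comm]
      have hmC : 0 < (m : ℝ) * C ^ 2 :=
        mul_pos (by exact_mod_cast hm) (pow_pos hCpos 2)
      have hfinal : S / ((m : ℝ) * C ^ 2) ≤ (r i) ^ 2 := by
        rw [div_le_iff₀ hmC]
        calc S ≤ C ^ 2 * T := hSCT
          _ ≤ C ^ 2 * ((m : ℝ) * (r i) ^ 2) := by
            exact mul_le_mul_of_nonneg_left hTm (sq_nonneg C)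
          _ = (r i) ^ 2 * ((m : ℝ) * C ^ 2) := by ring
      have : (1 - 1 / ((m : ℝ) * C ^ 2)) * S = S - S / ((m : ℝ) * C ^ 2) := by
        field_simp
      rw [this]
      linarith
end
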